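/- For the hypercube Q_n with n ≥ 3 odd, aw(Q_n,3) = 4, and moreover the unique (up to permuting colors) surjective 3-coloring of Q_n with no rainbow 3-AP colors one vertex x with color 1, its antipode (the complement string) with color 2, and all other vertices with color 3. -/

import Mathlib

namespace AntiVDW

/-- `v 0, v 1, …, v (k-1)` is a `k`-term arithmetic progression in `G`:
consecutive vertices are at a common finite distance `d`. -/
def IsAPSeq {V : Type*} (G : SimpleGraph V) (k : ℕ) (v : ℕ → V) : Prop :=
  ∃ d : ℕ, ∀ i, i + 1 < k → G.Reachable (v i) (v (i + 1)) ∧ G.dist (v i) (v (i + 1)) = d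

/-- `G` contains a `k`-AP that is rainbow under the coloring `c`. -/
def HasRainbowAP {V α : Type*} (G : SimpleGraph V) (k : ℕ) (c : V → α) : Prop :=
  ∃ v : ℕ → V, IsAPSeq G k v ∧ ∀ i j, i < k → j < k → i ≠ j → c (v i) ≠ c (v j)

/-- The anti-van der Waerden number: the least positive `r` such that every
exact (surjective) `r`-coloring of `G` contains a rainbow `k`-AP. -/
noncomputable def aw {V : Type*} (G : SimpleGraph V) (k : ℕ) : ℕ :=
  sInf {r : ℕ | 0 < r ∧ ∀ c : V → Fin r, Function.Surjective c → HasRainbowAP G k c}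

/-- Eccentricity of a vertex. -/
noncomputable def ecc {V : Type*} [Fintype V] (G : SimpleGraph V) (v : V) : ℕ :=
  Finset.univ.sup fun u => G.dist v u

/-- Radius of a graph. -/
noncomputable def rad {V : Type*} [Fintype V] [Nonempty V] (G : SimpleGraph V) : ℕ :=
  Finset.univ.inf' Finset.univ_nonempty (ecc G)

/-- Diameter of a graph. -/
noncomputable def diam {V : Type*} [Fintype V] (G : SimpleGraph V) : ℕ :=
  Finset.univ.sup (ecc G)

/-- The `n`-dimensional hypercube. -/
def hypercube (n : ℕ) : SimpleGraph (Fin n → Bool) where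
  Adj x y := hammingDist x y = 1
  symm := ⟨fun x y h => by show hammingDist y x = 1; rwa [hammingDist_comm]⟩
  loopless := ⟨fun x h => by simp [hammingDist_self] at h⟩

namespace Aux

open Finset

variable {n : ℕ}

abbrev V (n : ℕ) := Fin n → Bool

def neg (x : V n) : V n := fun i => !(x i)

@[simp] lemma neg_neg (x : V n) : neg (neg x) = x := by
  funext i; simp [neg]

lemma bool_ne_iff {a b : Bool} : a ≠ b ↔ b = !a := by
  cases a <;> cases b <;> simp

/-- difference set -/
def df (x y : V n) : Finset (Fin n) := Finset.univ.filter fun i => x i ≠ y i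

lemma hd_eq (x y : V n) : hammingDist x y = (df x y).card := rfl

lemma mem_df {x y : V n} {i : Fin n} : i ∈ df x y ↔ x i ≠ y i := by
  simp [df]

lemma df_neg (x y : V n) : df x (neg y) = Finset.univ \ df x y := by
  ext i
  simp only [mem_df, mem_sdiff, mem_univ, true_and, neg]
  cases x i <;> cases y i <;> simp

lemma hd_le (x y : V n) : hammingDist x y ≤ n := by
  simpa using (hammingDist_le_card_fintype (x := x) (y := y))

lemma hd_neg_right (x y : V n) : hammingDist x (neg y) + hammingDist x y = n := by
  rw [hd_eq, hd_eq, df_neg, Finset.card_sdiff_of_subset (Finset.subset_univ _)]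
  have := Finset.card_le_card (Finset.subset_univ (df x y))
  simp only [Finset.card_univ, Fintype.card_fin] at *
  omega

lemma hd_neg_left (x y : V n) : hammingDist (neg x) y + hammingDist x y = n := by
  rw [hammingDist_comm, hammingDist_comm x y]; exact hd_neg_right y x

lemma hd_neg_neg (x y : V n) : hammingDist (neg x) (neg y) = hammingDist x y := by
  have h1 := hd_neg_right (neg x) y
  have h2 := hd_neg_left x y
  omega

lemma hd_self_neg (x : V n) : hammingDist x (neg x) = n := by
  have := hd_neg_right x x
  simp [hammingDist_self] at this
  omega

lemma eq_neg_of_hd_eq_n {x y : V n} (h : hammingDist x y = n) : y = neg x := by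
  have : df x y = Finset.univ := by
    apply Finset.eq_univ_of_card
    rw [← hd_eq, h]; simp
  funext i
  have hi : i ∈ df x y := this ▸ Finset.mem_univ i
  rw [mem_df] at hi
  have := bool_ne_iff.1 hi
  simpa [neg] using this

lemma neg_ne (hn : 1 ≤ n) (x : V n) : neg x ≠ x := by
  intro h
  have h2 := hd_self_neg x
  rw [h, hammingDist_self] at h2
  omega

/-- Workhorse: construct a point with prescribed distances to `x` and `z`,
agreeing with `x` on `F`. -/
lemma exists_flip (x z : V n) (F : Finset (Fin n)) (o u : ℕ)
    (ho : o ≤ ((df x z) \ F).card) (hu : u ≤ ((Finset.univ \ df x z) \ F).card) :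
    ∃ s : V n, (∀ i ∈ F, s i = x i) ∧ hammingDist x s = o + u ∧
      hammingDist z s + o = hammingDist x z + u := by
  obtain ⟨A, hA, hAc⟩ := Finset.exists_subset_card_eq ho
  obtain ⟨B, hB, hBc⟩ := Finset.exists_subset_card_eq hu
  have hAdf : A ⊆ df x z := hA.trans (Finset.sdiff_subset)
  have hAF : ∀ i ∈ A, i ∉ F := fun i hi => (Finset.mem_sdiff.1 (hA hi)).2
  have hBdf : ∀ i ∈ B, i ∉ df x z := fun i hi => (Finset.mem_sdiff.1 ((Finset.sdiff_subset) (hB hi))).2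
  have hBF : ∀ i ∈ B, i ∉ F := fun i hi => (Finset.mem_sdiff.1 (hB hi)).2
  have hABdisj : Disjoint A B := by
    rw [Finset.disjoint_left]
    intro i hiA hiB
    exact hBdf i hiB (hAdf hiA)
  refine ⟨fun i => if i ∈ A ∪ B then !(x i) else x i, ?_, ?_, ?_⟩
  · intro i hiF
    have : i ∉ A ∪ B := by
      rw [Finset.mem_union]
      rintro (h | h)
      exacts [hAF i h hiF, hBF i h hiF]
    simp [this]
  · rw [hd_eq]
    have : df x (fun i => if i ∈ A ∪ B then !(x i) else x i) = A ∪ B := by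
      ext i
      rw [mem_df]
      by_cases hi : i ∈ A ∪ B <;> simp [hi]
    rw [this, Finset.card_union_of_disjoint hABdisj, hAc, hBc]
  · rw [hd_eq, hd_eq]
    have : df z (fun i => if i ∈ A ∪ B then !(x i) else x i) = (df x z \ A) ∪ B := by
      ext i
      simp only [mem_df, Finset.mem_union, Finset.mem_sdiff]
      by_cases hiA : i ∈ A
      · have hxz : x i ≠ z i := mem_df.1 (hAdf hiA)
        have hiB : i ∉ B := Finset.disjoint_left.1 hABdisj hiA
        rw [if_pos (Or.inl hiA)]
        revert hxz
        simp only [hiA, hiB, not_true, and_false, false_or, or_false]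
        cases x i <;> cases z i <;> simp
      · by_cases hiB : i ∈ B
        · have hxz : ¬ (x i ≠ z i) := fun h => hBdf i hiB (mem_df.2 h)
          push_neg at hxz
          rw [if_pos (Or.inr hiB)]
          revert hxz
          simp only [hiB, or_true, iff_true]
          cases x i <;> cases z i <;> simp
        · rw [if_neg (by tauto : ¬ (i ∈ A ∨ i ∈ B))]
          simp only [hiA, hiB, not_false_iff, and_true, or_false]
          cases x i <;> cases z i <;> simp
    rw [this]
    have hdisj2 : Disjoint (df x z \ A) B := by
      rw [Finset.disjoint_left]
      intro i hi hiB
      exact hBdf i hiB (Finset.mem_sdiff.1 hi).1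
    rw [Finset.card_union_of_disjoint hdisj2, Finset.card_sdiff_of_subset hAdf, hAc, hBc]
    have := Finset.card_le_card hAdf
    omega


section Graph

variable {n : ℕ}

lemma df_update {x y : V n} {i : Fin n} (h : x i ≠ y i) :
    df (Function.update x i (y i)) y = df x y \ {i} := by
  ext j
  simp only [mem_df, Finset.mem_sdiff, Finset.mem_singleton]
  by_cases hj : j = i
  · subst hj; simp [Function.update_self]
  · simp [Function.update_of_ne hj, hj]

lemma df_update_self {x y : V n} {i : Fin n} (h : x i ≠ y i) :
    df x (Function.update x i (y i)) = {i} := by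
  ext j
  simp only [mem_df, Finset.mem_singleton]
  by_cases hj : j = i
  · subst hj; simp [Function.update_self]
    exact h
  · simp [Function.update_of_ne hj, hj]

lemma exists_walk : ∀ (k : ℕ) (x y : V n), hammingDist x y = k →
    ∃ p : (hypercube n).Walk x y, p.length = k := by
  intro k
  induction k with
  | zero =>
    intro x y h
    obtain rfl := hammingDist_eq_zero.1 h
    exact ⟨SimpleGraph.Walk.nil, rfl⟩
  | succ k ih =>
    intro x y h
    have hne : (df x y).Nonempty := by
      rw [← Finset.card_pos, ← hd_eq, h]; omega
    obtain ⟨i, hi⟩ := hne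
    rw [mem_df] at hi
    set x' := Function.update x i (y i) with hx'
    have hadj : (hypercube n).Adj x x' := by
      show hammingDist x x' = 1
      rw [hd_eq, hx', df_update_self hi, Finset.card_singleton]
    have hd2 : hammingDist x' y = k := by
      rw [hd_eq, hx', df_update hi, Finset.card_sdiff_of_subset (by simpa [Finset.singleton_subset_iff, mem_df] using hi),
        ← hd_eq, h]
      simp
    obtain ⟨p, hp⟩ := ih x' y hd2
    exact ⟨SimpleGraph.Walk.cons hadj p, by simp [hp]⟩

lemma hreach (x y : V n) : (hypercube n).Reachable x y := by
  obtain ⟨p, -⟩ := exists_walk (hammingDist x y) x y rfl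
  exact ⟨p⟩

lemma hd_le_walk (x y : V n) (p : (hypercube n).Walk x y) : hammingDist x y ≤ p.length := by
  induction p with
  | nil => simp [hammingDist_self]
  | cons hadj p ih =>
    rename_i a b c'
    have h1 : hammingDist a b = 1 := hadj
    calc hammingDist a c' ≤ hammingDist a b + hammingDist b c' := hammingDist_triangle _ _ _
    _ ≤ 1 + p.length := by rw [h1]; omega
    _ = (SimpleGraph.Walk.cons hadj p).length := by simp [Nat.add_comm]

lemma dist_eq (x y : V n) : (hypercube n).dist x y = hammingDist x y := by
  apply le_antisymm
  · obtain ⟨p, hp⟩ := exists_walk (hammingDist x y) x y rfl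
    exact hp ▸ SimpleGraph.dist_le p
  · obtain ⟨p, hp⟩ := (hreach x y).exists_walk_length_eq_dist
    exact hp ▸ hd_le_walk x y p

lemma mk_rainbow {c : V n → Fin 3} {a s b : V n}
    (h : hammingDist s a = hammingDist s b)
    (h1 : c s ≠ c a) (h2 : c s ≠ c b) (h3 : c a ≠ c b) :
    HasRainbowAP (hypercube n) 3 c := by
  refine ⟨fun i => if i = 0 then a else if i = 1 then s else b, ⟨(hypercube n).dist a s, ?_⟩, ?_⟩
  · intro i hi
    have hi2 : i < 2 := by omega
    interval_cases i
    · exact ⟨hreach _ _, by norm_num⟩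
    · refine ⟨hreach _ _, ?_⟩
      have h5 : (hypercube n).dist s b = (hypercube n).dist a s := by
        rw [dist_eq, dist_eq, hammingDist_comm a s, h]
      norm_num
      exact h5
  · intro i j hi hj hij
    interval_cases i <;> interval_cases j <;> simp_all [ne_comm]

/-- From a rainbow AP extract a "kill" certificate. -/
lemma kill_of_noRainbow {c : V n → Fin 3} (hNR : ¬ HasRainbowAP (hypercube n) 3 c) :
    ∀ a s b : V n, c s ≠ c a → c s ≠ c b → c a ≠ c b →
      hammingDist s a ≠ hammingDist s b := by
  intro a s b h1 h2 h3 h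
  exact hNR (mk_rainbow h h1 h2 h3)

end Graph


section Machines

variable {n : ℕ} {c : V n → Fin 3}

lemma fin3_cases : ∀ (α β γ δ : Fin 3), α ≠ β → α ≠ γ → β ≠ γ →
    δ = α ∨ δ = β ∨ δ = γ := by decide

lemma fin3_eq : ∀ (α β x y : Fin 3), x ≠ α → x ≠ β → y ≠ α → y ≠ β → α ≠ β → x = y := by decide

lemma fin3_third : ∀ (α β : Fin 3), α ≠ β → ∃ γ, γ ≠ α ∧ γ ≠ β := by decide

/-- F = ∅ version of the workhorse. -/
lemma exists_flip0 (x z : V n) (o u : ℕ) (ho : o ≤ hammingDist x z)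
    (hu : u ≤ n - hammingDist x z) :
    ∃ s : V n, hammingDist x s = o + u ∧ hammingDist z s + o = hammingDist x z + u := by
  have h1 : ((df x z) \ (∅ : Finset (Fin n))).card = hammingDist x z := by
    rw [Finset.sdiff_empty, ← hd_eq]
  have h2 : ((Finset.univ \ df x z) \ (∅ : Finset (Fin n))).card = n - hammingDist x z := by
    rw [Finset.sdiff_empty, Finset.card_sdiff_of_subset (Finset.subset_univ _), ← hd_eq]
    simp
  obtain ⟨s, -, h3, h4⟩ := exists_flip x z ∅ o u (by omega) (by omega)
  exact ⟨s, h3, h4⟩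

/-- notation-free abbreviation for the rainbow-kill certificate -/
def Kill (c : V n → Fin 3) : Prop :=
  ∀ a s b : V n, c s ≠ c a → c s ≠ c b → c a ≠ c b →
    hammingDist s a ≠ hammingDist s b

lemma hd_comm (x y : V n) : hammingDist x y = hammingDist y x := hammingDist_comm x y

lemma hd_neg_r (x y : V n) : hammingDist x (neg y) = n - hammingDist x y := by
  have := hd_neg_right x y; omega

lemma hd_neg_l (x y : V n) : hammingDist (neg x) y = n - hammingDist x y := by
  have := hd_neg_left x y; omega

/-- Full sphere lemma: the sphere about `p` through `q` is monochromatic in `c q`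
whenever all non-`W` vertices have antipode colored `W`. -/
lemma FS {W : Fin 3} (K : Kill c) (hW : ∀ v : V n, c v ≠ W → c (neg v) = W)
    {p q w : V n} (hp : c p ≠ W) (hq : c q ≠ W) (hpq : c p ≠ c q)
    (hdist : hammingDist p w = hammingDist p q) : c w = c q := by
  rcases fin3_cases W (c p) (c q) (c w) hp.symm hq.symm hpq with h | h | h
  · exfalso
    exact K w p q (by rw [h]; exact hp) hpq (by rw [h]; exact hq.symm) hdist
  · exfalso
    have hnp : c (neg p) = W := hW p hp
    refine K w (neg p) q ?_ ?_ ?_ ?_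
    · rw [hnp, h]; exact hp.symm
    · rw [hnp]; exact hq.symm
    · rw [h]; exact hpq
    · rw [hd_neg_l, hd_neg_l, hdist]
  · exact h

/-- Machine (2e): if every vertex colored differently from `W` has its antipode colored `W`,
and there are two non-`W` classes both realized, contradiction. -/
lemma M2e_aux {W : Fin 3} (hn : 3 ≤ n) (hodd : Odd n) (K : Kill c)
    (hW : ∀ v : V n, c v ≠ W → c (neg v) = W) :
    ∀ (k : ℕ) (a b : V n), c a ≠ W → c b ≠ W → c a ≠ c b →
      n ≤ hammingDist a b + k → False := by
  intro k
  induction k with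
  | zero =>
    intro a b ha hb hab hk
    have h1 := hd_le a b
    have h2 : hammingDist a b = n := by omega
    have h3 : b = neg a := eq_neg_of_hd_eq_n h2
    rw [h3, hW a ha] at hb
    exact hb rfl
  | succ k ih =>
    intro a b ha hb hab hk
    set d := hammingDist a b with hd
    have hdn : d ≤ n := hd_le a b
    have hd1 : 1 ≤ d := by
      by_contra h
      have h0 : hammingDist a b = 0 := by omega
      exact hab (by rw [hammingDist_eq_zero.1 h0])
    by_cases hdeq : d = n
    · have h3 : b = neg a := eq_neg_of_hd_eq_n hdeq
      rw [h3, hW a ha] at hb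
      exact hb rfl
    · have hdn1 : d ≤ n - 1 := by omega
      by_cases h3d : n ≤ 3 * d
      · -- final kill
        have hdodd : ¬ (d % 2 = 0) := by
          intro hev
          obtain ⟨s, hs1, hs2⟩ := exists_flip0 a b (d / 2) 0 (by omega) (by omega)
          have hs1' : hammingDist a s = d / 2 := by omega
          have hs2' : hammingDist b s = d / 2 := by omega
          by_cases hcs : c s = W
          · exact K a s b (by rw [hcs]; exact fun h => ha h.symm)
              (by rw [hcs]; exact fun h => hb h.symm) hab
              (by rw [hd_comm s a, hd_comm s b, hs1', hs2'])
          · have hns : c (neg s) = W := hW s hcs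
            refine K a (neg s) b ?_ ?_ hab ?_
            · rw [hns]; exact fun h => ha h.symm
            · rw [hns]; exact fun h => hb h.symm
            · rw [hd_comm (neg s) a, hd_comm (neg s) b, hd_neg_r, hd_neg_r, hs1', hs2']
        obtain ⟨nn, hnn⟩ := hodd
        have hodd' : d % 2 = 1 := by omega
        obtain ⟨a2, ha2, ha2'⟩ := exists_flip0 a b ((n - d) / 2) ((n - d) / 2)
          (by omega) (by omega)
        have ha2d : hammingDist a a2 = n - d := by omega
        have ha2b : hammingDist b a2 = d := by omega
        have hca2 : c a2 = c a := by
          refine FS K hW hb ha (fun h => hab h.symm) ?_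
          rw [ha2b, hd_comm b a, hd]
        have hna2 : c (neg a2) = W := by
          apply hW; rw [hca2]; exact ha
        refine K (neg a2) a b ?_ ?_ ?_ ?_
        · rw [hna2]; exact ha
        · exact hab
        · rw [hna2]; exact fun h => hb h.symm
        · rw [hd_comm a (neg a2), hd_neg_l, hd_comm a2 a, ha2d, ← hd]
          omega
      · -- boost
        have h2d : 2 * d ≤ n := by omega
        obtain ⟨a', ha'1, ha'2⟩ := exists_flip0 a b d d (le_refl d) (by omega)
        have ha'a : hammingDist a a' = 2 * d := by omega
        have ha'b : hammingDist b a' = d := by omega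
        have hca' : c a' = c a := by
          refine FS K hW hb ha (fun h => hab h.symm) ?_
          rw [ha'b, hd_comm b a, hd]
        obtain ⟨b', hb'1, hb'2⟩ := exists_flip0 a a' 0 d (by omega) (by omega)
        have hb'a : hammingDist a b' = d := by omega
        have hb'a' : hammingDist a' b' = 3 * d := by omega
        have hcb' : c b' = c b := by
          refine FS K hW ha hb hab ?_
          rw [hb'a, hd]
        refine ih a' b' (by rw [hca']; exact ha) (by rw [hcb']; exact hb)
          (by rw [hca', hcb']; exact hab) ?_
        rw [hb'a']
        omega

lemma M2e {W : Fin 3} (hn : 3 ≤ n) (hodd : Odd n) (K : Kill c)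
    (hW : ∀ v : V n, c v ≠ W → c (neg v) = W)
    {a b : V n} (ha : c a ≠ W) (hb : c b ≠ W) (hab : c a ≠ c b) : False :=
  M2e_aux hn hodd K hW n a b ha hb hab (by omega)

/-- Parity additivity of Hamming distance. -/
lemma hd_parity (a p b : V n) :
    ∃ k, hammingDist a b + 2 * k = hammingDist a p + hammingDist p b := by
  refine ⟨((df a p) ∩ (df p b)).card, ?_⟩
  have hds : df a b = symmDiff (df a p) (df p b) := by
    ext i
    simp only [mem_df, Finset.mem_symmDiff, mem_df]
    cases a i <;> cases p i <;> cases b i <;> simp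
  have h1 : symmDiff (df a p) (df p b) = ((df a p) ∪ (df p b)) \ ((df a p) ∩ (df p b)) := by
    ext i
    simp only [Finset.mem_symmDiff, Finset.mem_union, Finset.mem_sdiff, Finset.mem_inter]
    tauto
  have h2 := Finset.card_union_add_card_inter (df a p) (df p b)
  have h3 : ((df a p) ∩ (df p b)) ⊆ ((df a p) ∪ (df p b)) :=
    (Finset.inter_subset_left).trans Finset.subset_union_left
  rw [hd_eq a b, hds, h1, Finset.card_sdiff_of_subset h3]
  rw [hd_eq a p, hd_eq p b]
  have h4 := Finset.card_le_card h3
  omega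

/-- (pattern H-kill) : two antipodal pairs with matching "bar" colors and distinct
front colors must be at even distance (no-mono case). -/
lemma EVN (hodd : Odd n) (K : Kill c) (hNoMono : ∀ v : V n, c v ≠ c (neg v))
    {v w : V n} (hvw : c v ≠ c w) (hbar : c (neg v) = c (neg w)) :
    hammingDist v w % 2 = 0 := by
  by_contra hoddd
  set t := hammingDist v w with ht
  have htn : t ≤ n := hd_le v w
  obtain ⟨nn, hnn⟩ := hodd
  have htn' : t ≠ n := by
    intro h
    have hw : w = neg v := eq_neg_of_hd_eq_n h
    apply hvw
    have h2 : c (neg w) = c v := by rw [hw, neg_neg]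
    rw [hw, hbar, h2]
  have hvwn : hammingDist (neg v) w = n - t := by rw [hd_neg_l]
  obtain ⟨s, hs1, hs2⟩ := exists_flip0 (neg v) w ((n-t)/2) 0
    (by rw [hvwn]; omega) (Nat.zero_le _)
  rw [hvwn] at hs2
  have hs1' : hammingDist (neg v) s = (n-t)/2 := by omega
  have hs2' : hammingDist w s = (n-t)/2 := by omega
  have hsv : hammingDist v s = n - (n-t)/2 := by
    have := hd_neg_left v s
    omega
  have hRQ : c w ≠ c (neg v) := by rw [hbar]; exact hNoMono w
  have hPQ : c v ≠ c (neg v) := hNoMono v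
  rcases fin3_cases (c v) (c w) (c (neg v)) (c s) hvw hPQ hRQ with h | h | h
  · refine K (neg v) s w (by rw [h]; exact hPQ) (by rw [h]; exact hvw)
      (fun h2 => hRQ h2.symm) ?_
    rw [hd_comm s (neg v), hd_comm s w, hs1', hs2']
  · refine K (neg w) s v ?_ ?_ ?_ ?_
    · rw [h, ← hbar]; exact hRQ
    · rw [h]; exact fun h2 => hvw h2.symm
    · rw [← hbar]; exact (hNoMono v).symm
    · rw [hd_comm s (neg w), hd_neg_l, hs2', hd_comm s v, hsv]
  · have hs1ne : c (neg s) ≠ c (neg v) := by rw [← h]; exact (hNoMono s).symm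
    rcases fin3_cases (c v) (c w) (c (neg v)) (c (neg s)) hvw hPQ hRQ with h2 | h2 | h2
    · refine K (neg v) (neg s) w (by rw [h2]; exact hPQ) (by rw [h2]; exact hvw)
        (fun h3 => hRQ h3.symm) ?_
      rw [hd_neg_neg, hd_comm s v, hsv, hd_comm (neg s) w, hd_neg_r, hs2']
    · refine K (neg w) (neg s) v ?_ ?_ ?_ ?_
      · rw [h2, ← hbar]; exact hRQ
      · rw [h2]; exact fun h3 => hvw h3.symm
      · rw [← hbar]; exact (hNoMono v).symm
      · rw [hd_neg_neg, hd_comm s w, hs2', hd_comm (neg s) v, hd_neg_r, hsv]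
        omega
    · exact hs1ne h2

lemma pattern (hodd : Odd n) (K : Kill c) (hNoMono : ∀ v : V n, c v ≠ c (neg v))
    {x z₀ w : V n} (hxz : c z₀ ≠ c x) (hzbar : c (neg z₀) = c (neg x))
    (hw : (c w = c x ∧ c (neg w) = c z₀) ∨ (c w = c z₀ ∧ c (neg w) = c x)) : False := by
  have I1 : hammingDist x z₀ % 2 = 0 :=
    EVN hodd K hNoMono (fun h => hxz h.symm) hzbar.symm
  obtain ⟨k0, hk0⟩ := hd_parity x w z₀
  have hnxz : c (neg x) ≠ c z₀ := by rw [← hzbar]; exact (hNoMono z₀).symm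
  rcases hw with ⟨hw1, hw2⟩ | ⟨hw1, hw2⟩
  · have I2 : hammingDist (neg x) (neg w) % 2 = 0 := by
      apply EVN hodd K hNoMono
      · rw [hw2]; exact hnxz
      · rw [neg_neg, neg_neg, hw1]
    rw [hd_neg_neg] at I2
    have I3 : hammingDist w (neg z₀) % 2 = 0 := by
      apply EVN hodd K hNoMono
      · rw [hw1, hzbar]; exact hNoMono x
      · rw [neg_neg, hw2]
    have hsum := hd_neg_right w z₀
    obtain ⟨nn, hnn⟩ := hodd
    omega
  · have I2 : hammingDist (neg x) w % 2 = 0 := by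
      apply EVN hodd K hNoMono
      · rw [hw1]; exact hnxz
      · rw [neg_neg, hw2]
    have hsum2 := hd_neg_left x w
    have I3 : hammingDist (neg w) (neg z₀) % 2 = 0 := by
      apply EVN hodd K hNoMono
      · rw [hw2, hzbar]; exact hNoMono x
      · rw [neg_neg, neg_neg, hw1]
    rw [hd_neg_neg] at I3
    obtain ⟨nn, hnn⟩ := hodd
    omega

lemma hd_add {s u v : V n} (h : ∀ i ∈ df u v, s i = u i) :
    hammingDist s v = hammingDist s u + hammingDist u v := by
  rw [hd_eq s v, hd_eq s u, hd_eq u v]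
  have huni : df s v = df s u ∪ df u v := by
    ext i
    simp only [mem_df, Finset.mem_union]
    by_cases hi : i ∈ df u v
    · have h1 := h i hi
      have h2 := mem_df.1 hi
      rw [h1]
      tauto
    · have h2 : u i = v i := by
        by_contra h3
        exact hi (mem_df.2 h3)
      rw [← h2]
      tauto
  have hdisj : Disjoint (df s u) (df u v) := by
    rw [Finset.disjoint_left]
    intro i hi1 hi2
    exact (mem_df.1 hi1) (h i hi2)
  rw [huni, Finset.card_union_of_disjoint hdisj]

lemma M1 (hn : 3 ≤ n) (hodd : Odd n) (K : Kill c)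
    (hMono : ∀ v : V n, c v = c (neg v))
    {u v z : V n} (huv : hammingDist u v = 1) (hPQ : c u ≠ c v)
    (hz1 : c z ≠ c u) (hz2 : c z ≠ c v) : False := by
  obtain ⟨m, hm⟩ := hodd
  set t := hammingDist u z with ht
  have ht1 : 1 ≤ t := by
    by_contra h
    have h0 : hammingDist u z = 0 := by omega
    exact hz1 ((congrArg c (hammingDist_eq_zero.1 h0)).symm)
  have hdle := hd_le u z
  have htn : t ≤ n - 1 := by
    by_contra h
    have h2 : t = n := by omega
    have h3 : z = neg u := eq_neg_of_hd_eq_n h2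
    apply hz1
    rw [h3, ← hMono u]
  have hA : (df u z).card = t := (hd_eq u z).symm
  have hF : (df u v).card = 1 := by rw [← hd_eq]; exact huv
  have hAv : t ≤ ((df u z) \ (df u v)).card + 1 := by
    have hs : df u z ⊆ (df u z \ df u v) ∪ df u v := by
      intro i hi
      by_cases h : i ∈ df u v
      · exact Finset.mem_union_right _ h
      · exact Finset.mem_union_left _ (Finset.mem_sdiff.2 ⟨hi, h⟩)
    have h1 := Finset.card_le_card hs
    have h2 := Finset.card_union_le (df u z \ df u v) (df u v)
    omega
  have hU : (Finset.univ \ df u z).card = n - t := by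
    rw [Finset.card_sdiff_of_subset (Finset.subset_univ _), Finset.card_univ, Fintype.card_fin, hA]
  have hUv : n - t ≤ ((Finset.univ \ df u z) \ (df u v)).card + 1 := by
    have hs : (Finset.univ \ df u z) ⊆ ((Finset.univ \ df u z) \ df u v) ∪ df u v := by
      intro i hi
      by_cases h : i ∈ df u v
      · exact Finset.mem_union_right _ h
      · exact Finset.mem_union_left _ (Finset.mem_sdiff.2 ⟨hi, h⟩)
    have h1 := Finset.card_le_card hs
    have h2 := Finset.card_union_le ((Finset.univ \ df u z) \ df u v) (df u v)
    omega
  obtain ⟨s, hsF, hs1, hs2⟩ := exists_flip u z (df u v) (t/2) (m - t/2)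
    (by omega) (by omega)
  have hsu : hammingDist u s = m := by omega
  have hsz : hammingDist z s = m + (t - 2*(t/2)) := by omega
  have hsv : hammingDist s v = m + 1 := by
    rw [hd_add (fun i hi => hsF i hi), hd_comm s u, hsu, huv]
  have hNVv : c (neg v) = c v := (hMono v).symm
  have hNUu : c (neg u) = c u := (hMono u).symm
  have hzt : t - 2*(t/2) = 0 ∨ t - 2*(t/2) = 1 := by omega
  rcases fin3_cases (c u) (c v) (c z) (c s) hPQ (fun h => hz1 h.symm)
    (fun h => hz2 h.symm) with h | h | h
  · rcases hzt with h0 | h0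
    · refine K (neg v) s z ?_ ?_ ?_ ?_
      · rw [h, hNVv]; exact hPQ
      · rw [h]; exact fun h2 => hz1 h2.symm
      · rw [hNVv]; exact fun h2 => hz2 h2.symm
      · rw [hd_neg_r, hsv, hd_comm s z, hsz, h0]
        omega
    · refine K v s z (by rw [h]; exact hPQ) (by rw [h]; exact fun h2 => hz1 h2.symm)
        (fun h2 => hz2 h2.symm) ?_
      rw [hsv, hd_comm s z, hsz, h0]
  · rcases hzt with h0 | h0
    · refine K u s z (by rw [h]; exact fun h2 => hPQ h2.symm)
        (by rw [h]; exact fun h2 => hz2 h2.symm) (fun h2 => hz1 h2.symm) ?_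
      rw [hd_comm s u, hsu, hd_comm s z, hsz, h0]
      omega
    · refine K (neg u) s z ?_ ?_ ?_ ?_
      · rw [h, hNUu]; exact fun h2 => hPQ h2.symm
      · rw [h]; exact fun h2 => hz2 h2.symm
      · rw [hNUu]; exact fun h2 => hz1 h2.symm
      · rw [hd_comm s (neg u), hd_neg_l, hsu, hd_comm s z, hsz, h0]
        omega
  · refine K u s (neg v) ?_ ?_ ?_ ?_
    · rw [h]; exact hz1
    · rw [h, hNVv]; exact hz2
    · rw [hNVv]; exact hPQ
    · rw [hd_comm s u, hsu, hd_neg_r, hsv]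
      omega

lemma kill2a (K : Kill c) {x : V n} (hx : c x ≠ c (neg x))
    {z' : V n} (hz1 : c z' ≠ c x) (hz2 : c z' ≠ c (neg x))
    (hz3 : c (neg z') ≠ c x) (hz4 : c (neg z') ≠ c (neg x))
    {s : V n}
    (hG : hammingDist x s = hammingDist z' s ∨ hammingDist x s + hammingDist z' s = n) :
    c s ≠ c x ∧ c s ≠ c (neg x) := by
  have hdle1 := hd_le x s
  have hdle2 := hd_le z' s
  have e1 : hammingDist s x = hammingDist x s := hd_comm s x
  have e2 : hammingDist s z' = hammingDist z' s := hd_comm s z'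
  constructor
  · intro h
    rcases hG with hG | hG
    · refine K (neg x) s (neg z') ?_ ?_ ?_ ?_
      · rw [h]; exact hx
      · rw [h]; exact fun h2 => hz3 h2.symm
      · exact fun h2 => hz4 h2.symm
      · rw [hd_comm s (neg x), hd_neg_l, hd_comm s (neg z'), hd_neg_l, hd_comm x s,
          hd_comm z' s]
        omega
    · refine K (neg x) s z' (by rw [h]; exact hx)
        (by rw [h]; exact fun h2 => hz1 h2.symm) (fun h2 => hz2 h2.symm) ?_
      rw [hd_comm s (neg x), hd_neg_l, hd_comm s z']
      omega
  · intro h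
    rcases hG with hG | hG
    · refine K x s z' ?_ ?_ ?_ ?_
      · rw [h]; exact hx.symm
      · rw [h]; exact fun h2 => hz2 h2.symm
      · exact fun h2 => hz1 h2.symm
      · rw [hd_comm s x, hd_comm s z']
        omega
    · refine K x s (neg z') ?_ ?_ ?_ ?_
      · rw [h]; exact hx.symm
      · rw [h]; exact fun h2 => hz4 h2.symm
      · exact fun h2 => hz3 h2.symm
      · rw [hd_comm s x, hd_comm s (neg z'), hd_neg_l, hd_comm z' s]
        omega

lemma dich (K : Kill c) {x : V n} (hx : c x ≠ c (neg x)) {r w : V n}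
    (hrw : hammingDist x r = hammingDist x w)
    (hr1 : c r ≠ c x) (hr2 : c r ≠ c (neg x)) :
    c w ≠ c x ∧ c w ≠ c (neg x) := by
  constructor
  · intro h
    refine K r (neg x) w ?_ ?_ ?_ ?_
    · exact fun h2 => hr2 h2.symm
    · rw [h]; exact hx.symm
    · rw [h]; exact hr1
    · rw [hd_neg_l, hd_neg_l, hrw]
  · intro h
    exact K r x w (fun h2 => hr1 h2.symm) (by rw [h]; exact hx) (by rw [h]; exact hr2) hrw

lemma step2a (K : Kill c) {x : V n} (hx : c x ≠ c (neg x)) (k δ : ℕ)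
    (hk2 : k % 2 = 0) (hk1 : 1 ≤ k) (hkn : k ≤ n - 1) (hn : 3 ≤ n)
    (Rk : ∀ w, hammingDist x w = k → c w ≠ c x ∧ c w ≠ c (neg x))
    (Rnk : ∀ w, hammingDist x w = n - k → c w ≠ c x ∧ c w ≠ c (neg x))
    (hδ1 : k / 2 ≤ δ) (hδ2 : δ ≤ n - k / 2) :
    ∀ w, hammingDist x w = δ → c w ≠ c x ∧ c w ≠ c (neg x) := by
  obtain ⟨z', hz'1, -⟩ := exists_flip0 x x 0 k (Nat.zero_le _)
    (by rw [hammingDist_self]; omega)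
  have hz'd : hammingDist x z' = k := by omega
  have hc1 := Rk z' hz'd
  have hc2 := Rnk (neg z') (by rw [hd_neg_r, hz'd])
  obtain ⟨s, hs1, hs2⟩ := exists_flip0 x z' (k/2) (δ - k/2)
    (by rw [hz'd]; omega) (by rw [hz'd]; omega)
  rw [hz'd] at hs2
  have hsx : hammingDist x s = δ := by omega
  have hsz : hammingDist z' s = δ := by omega
  have hcs := kill2a K hx hc1.1 hc1.2 hc2.1 hc2.2 (Or.inl (by rw [hsx, hsz]))
  intro w hw
  exact dich K hx (by rw [hsx, hw]) hcs.1 hcs.2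

lemma base2a (hodd : Odd n) (K : Kill c) {x : V n} (hx : c x ≠ c (neg x)) {z : V n}
    (hz1 : c z ≠ c x) (hz2 : c z ≠ c (neg x))
    (hz3 : c (neg z) ≠ c x) (hz4 : c (neg z) ≠ c (neg x))
    (δ : ℕ) (hδ : 2*δ = n - 1 ∨ 2*δ = n + 1) :
    ∀ w, hammingDist x w = δ → (c w ≠ c x ∧ c w ≠ c (neg x)) := by
  obtain ⟨m, hm⟩ := hodd
  set t := hammingDist x z with htdef
  have ht1 : 1 ≤ t := by
    by_contra h
    have h0 : hammingDist x z = 0 := by omega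
    exact hz1 ((congrArg c (hammingDist_eq_zero.1 h0)).symm)
  have hdle := hd_le x z
  have htn : t ≤ n - 1 := by
    by_contra h
    have h2 : t = n := by omega
    exact hz2 (by rw [eq_neg_of_hd_eq_n h2])
  by_cases hev : t % 2 = 0
  · obtain ⟨s, hs1, hs2⟩ := exists_flip0 x z (t/2) (δ - t/2) (by omega) (by omega)
    have hsx : hammingDist x s = δ := by omega
    have hsz : hammingDist z s = δ := by omega
    have hcs := kill2a K hx hz1 hz2 hz3 hz4 (Or.inl (by rw [hsx, hsz]))
    intro w hw
    exact dich K hx (by rw [hsx, hw]) hcs.1 hcs.2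
  · obtain ⟨s, hs1, hs2⟩ := exists_flip0 x z (δ - (n-t)/2) ((n-t)/2) (by omega) (by omega)
    have hsx : hammingDist x s = δ := by omega
    have hsz : hammingDist z s = n - δ := by omega
    have hcs := kill2a K hx hz1 hz2 hz3 hz4 (Or.inr (by rw [hsx, hsz]; omega))
    intro w hw
    exact dich K hx (by rw [hsx, hw]) hcs.1 hcs.2

lemma desc2a (hn : 3 ≤ n) (K : Kill c) {x : V n} (hx : c x ≠ c (neg x)) :
    ∀ a, 1 ≤ a → 2*a ≤ n - 1 →
    (∀ δ, a ≤ δ → δ ≤ n - a → ∀ w, hammingDist x w = δ → c w ≠ c x ∧ c w ≠ c (neg x)) →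
    (∀ δ, 1 ≤ δ → δ ≤ n - 1 → ∀ w, hammingDist x w = δ → c w ≠ c x ∧ c w ≠ c (neg x)) := by
  intro a
  induction a using Nat.strong_induction_on with
  | _ a ih =>
    intro ha1 han hA
    by_cases ha : a = 1
    · subst ha
      exact fun δ h1 h2 => hA δ h1 h2
    · have ha2 : 2 ≤ a := by omega
      set e := if a % 2 = 0 then a else a + 1 with he
      have hee : e % 2 = 0 ∧ a ≤ e ∧ e ≤ a + 1 := by
        rw [he]; split_ifs with h <;> omega
      have hRk := hA e (by omega) (by omega)
      have hRnk := hA (n - e) (by omega) (by omega)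
      refine ih (e/2) (by omega) (by omega) (by omega) ?_
      intro δ h1 h2 w hw
      exact step2a K hx e δ hee.1 (by omega) (by omega) hn hRk hRnk h1 h2 w hw

lemma M2a (hn : 3 ≤ n) (hodd : Odd n) (K : Kill c) {x z : V n}
    (hx : c x ≠ c (neg x))
    (hz1 : c z ≠ c x) (hz2 : c z ≠ c (neg x))
    (hz3 : c (neg z) ≠ c x) (hz4 : c (neg z) ≠ c (neg x)) :
    ∀ v : V n, v ≠ x → v ≠ neg x → c v ≠ c x ∧ c v ≠ c (neg x) := by
  obtain ⟨m, hm⟩ := hodd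
  have hbase : ∀ δ, m ≤ δ → δ ≤ n - m →
      ∀ w, hammingDist x w = δ → c w ≠ c x ∧ c w ≠ c (neg x) := by
    intro δ h1 h2 w hw
    exact base2a ⟨m, hm⟩ K hx hz1 hz2 hz3 hz4 δ (by omega) w hw
  have hall := desc2a hn K hx m (by omega) (by omega) hbase
  intro v hv1 hv2
  have hd0 : hammingDist x v ≠ 0 := fun h => hv1 (hammingDist_eq_zero.1 h).symm
  have hdn : hammingDist x v ≠ n := fun h => hv2 (eq_neg_of_hd_eq_n h)
  have := hd_le x v
  exact hall (hammingDist x v) (by omega) (by omega) v rfl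

lemma exists_adj_bichrom {c : V n → Fin 3} :
    ∀ (k : ℕ) (p q : V n), hammingDist p q = k → c p ≠ c q →
      ∃ u v : V n, hammingDist u v = 1 ∧ c u ≠ c v := by
  intro k
  induction k using Nat.strong_induction_on with
  | _ k ih =>
    intro p q hpq hc
    have hk1 : 1 ≤ k := by
      by_contra h
      have h2 : p = q := hammingDist_eq_zero.1 (by omega)
      exact hc (by rw [h2])
    by_cases hk : k = 1
    · exact ⟨p, q, by rw [hpq, hk], hc⟩
    · obtain ⟨r, hr1, hr2⟩ := exists_flip0 p q 1 0 (by omega) (Nat.zero_le _)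
      rw [hpq] at hr2
      by_cases hcr : c p = c r
      · exact ih (k-1) (by omega) q r (by omega)
          (fun h => hc (hcr.trans h.symm))
      · exact ⟨p, r, by omega, hcr⟩

lemma driver_aux (hn : 3 ≤ n) (hodd : Odd n) (K : Kill c)
    {x z₀ : V n} (hx : c x ≠ c (neg x))
    (hz01 : c z₀ ≠ c x) (hz02 : c z₀ ≠ c (neg x)) (hz0b : c (neg z₀) = c (neg x))
    (hno2a : ∀ z : V n, (c z ≠ c x ∧ c z ≠ c (neg x)) →
      (c (neg z) = c x ∨ c (neg z) = c (neg x))) :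
    ∃ y : V n, c y ≠ c (neg y) ∧
      (∀ v, v ≠ y → v ≠ neg y → c v ≠ c y ∧ c v ≠ c (neg y)) := by
  by_cases h3 : ∃ w : V n, (c w = c x ∧ c (neg w) = c z₀) ∨ (c w = c z₀ ∧ c (neg w) = c x)
  · obtain ⟨w, hw⟩ := h3
    by_cases h4 : ∃ v : V n, c v = c (neg v)
    · obtain ⟨v, hv⟩ := h4
      rcases fin3_cases (c x) (c (neg x)) (c z₀) (c v) hx (fun h => hz01 h.symm)
        (fun h => hz02 h.symm) with h | h | h
      · have hxz0 : c z₀ ≠ c (neg z₀) := by rw [hz0b]; exact hz02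
        refine ⟨z₀, hxz0, M2a hn hodd K (z := v) hxz0 ?_ ?_ ?_ ?_⟩
        · rw [h]; exact fun h2 => hz01 h2.symm
        · rw [h, hz0b]; exact hx
        · rw [← hv, h]; exact fun h2 => hz01 h2.symm
        · rw [← hv, h, hz0b]; exact hx
      · rcases hw with ⟨h1, h2⟩ | ⟨h1, h2⟩
        · have hww : c w ≠ c (neg w) := by rw [h1, h2]; exact fun hh => hz01 hh.symm
          refine ⟨w, hww, M2a hn hodd K (z := v) hww ?_ ?_ ?_ ?_⟩
          · rw [h, h1]; exact hx.symm
          · rw [h, h2]; exact fun hh => hz02 hh.symm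
          · rw [← hv, h, h1]; exact hx.symm
          · rw [← hv, h, h2]; exact fun hh => hz02 hh.symm
        · have hww : c w ≠ c (neg w) := by rw [h1, h2]; exact hz01
          refine ⟨w, hww, M2a hn hodd K (z := v) hww ?_ ?_ ?_ ?_⟩
          · rw [h, h1]; exact fun hh => hz02 hh.symm
          · rw [h, h2]; exact hx.symm
          · rw [← hv, h, h1]; exact fun hh => hz02 hh.symm
          · rw [← hv, h, h2]; exact hx.symm
      · exfalso
        rcases hno2a v ⟨by rw [h]; exact hz01, by rw [h]; exact hz02⟩ with h5 | h5
        · rw [← hv, h] at h5; exact hz01 h5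
        · rw [← hv, h] at h5; exact hz02 h5
    · push_neg at h4
      exact (pattern hodd K h4 hz01 hz0b hw).elim
  · by_cases h5 : ∃ v : V n, c v = c x ∧ c (neg v) = c x
    · obtain ⟨v, hv1, hv2⟩ := h5
      have hxz0 : c z₀ ≠ c (neg z₀) := by rw [hz0b]; exact hz02
      refine ⟨z₀, hxz0, M2a hn hodd K (z := v) hxz0 ?_ ?_ ?_ ?_⟩
      · rw [hv1]; exact fun h2 => hz01 h2.symm
      · rw [hv1, hz0b]; exact hx
      · rw [hv2]; exact fun h2 => hz01 h2.symm
      · rw [hv2, hz0b]; exact hx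
    · exfalso
      have hW : ∀ v : V n, c v ≠ c (neg x) → c (neg v) = c (neg x) := by
        intro v hv
        rcases fin3_cases (c x) (c (neg x)) (c z₀) (c v) hx (fun h => hz01 h.symm)
          (fun h => hz02 h.symm) with h | h | h
        · rcases fin3_cases (c x) (c (neg x)) (c z₀) (c (neg v)) hx (fun h => hz01 h.symm)
            (fun h => hz02 h.symm) with h2 | h2 | h2
          · exact absurd ⟨v, h, h2⟩ h5
          · exact h2
          · exact absurd ⟨v, Or.inl ⟨h, h2⟩⟩ h3
        · exact absurd h hv
        · rcases hno2a v ⟨by rw [h]; exact hz01, by rw [h]; exact hz02⟩ with h2 | h2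
          · exact absurd ⟨v, Or.inr ⟨h, h2⟩⟩ h3
          · exact h2
      exact M2e hn hodd K hW hx hz02 (fun h => hz01 h.symm)

lemma main_structure (hn : 3 ≤ n) (hodd : Odd n) {c : V n → Fin 3}
    (hsurj : Function.Surjective c) (hNR : ¬ HasRainbowAP (hypercube n) 3 c) :
    ∃ x : V n, c x ≠ c (neg x) ∧
      (∀ v, v ≠ x → v ≠ neg x → c v ≠ c x ∧ c v ≠ c (neg x)) := by
  have K : Kill c := kill_of_noRainbow hNR
  by_cases hmono : ∀ v₀ : V n, c v₀ = c (neg v₀)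
  · exfalso
    obtain ⟨p0, hp0⟩ := hsurj 0
    obtain ⟨p1, hp1⟩ := hsurj 1
    have hne : c p0 ≠ c p1 := by rw [hp0, hp1]; decide
    obtain ⟨u, v, huv, hcuv⟩ := exists_adj_bichrom (hammingDist p0 p1) p0 p1 rfl hne
    obtain ⟨R, hR1, hR2⟩ := fin3_third (c u) (c v) hcuv
    obtain ⟨z, hz⟩ := hsurj R
    exact M1 hn hodd K hmono huv hcuv (by rw [hz]; exact hR1) (by rw [hz]; exact hR2)
  · push_neg at hmono
    obtain ⟨x, hx⟩ := hmono
    by_cases h2a : ∃ z : V n, (c z ≠ c x ∧ c z ≠ c (neg x)) ∧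
        (c (neg z) ≠ c x ∧ c (neg z) ≠ c (neg x))
    · obtain ⟨z, ⟨hz1, hz2⟩, hz3, hz4⟩ := h2a
      exact ⟨x, hx, M2a hn hodd K hx hz1 hz2 hz3 hz4⟩
    · push_neg at h2a
      have hno2a : ∀ z : V n, (c z ≠ c x ∧ c z ≠ c (neg x)) →
          (c (neg z) = c x ∨ c (neg z) = c (neg x)) := by
        intro z hz
        by_cases hp : c (neg z) = c x
        · exact Or.inl hp
        · exact Or.inr (h2a z ⟨hz.1, hz.2⟩ hp)
      obtain ⟨R, hR1, hR2⟩ := fin3_third (c x) (c (neg x)) hx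
      obtain ⟨z₀, hz₀⟩ := hsurj R
      have hz01 : c z₀ ≠ c x := by rw [hz₀]; exact hR1
      have hz02 : c z₀ ≠ c (neg x) := by rw [hz₀]; exact hR2
      rcases hno2a z₀ ⟨hz01, hz02⟩ with hb | hb
      · -- c (neg z₀) = c x : use x' := neg x
        have hx' : c (neg x) ≠ c (neg (neg x)) := by rw [neg_neg]; exact hx.symm
        have hz01' : c z₀ ≠ c (neg x) := hz02
        have hz02' : c z₀ ≠ c (neg (neg x)) := by rw [neg_neg]; exact hz01
        have hz0b' : c (neg z₀) = c (neg (neg x)) := by rw [neg_neg]; exact hb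
        have hno2a' : ∀ z : V n, (c z ≠ c (neg x) ∧ c z ≠ c (neg (neg x))) →
            (c (neg z) = c (neg x) ∨ c (neg z) = c (neg (neg x))) := by
          intro z hz
          rw [neg_neg] at hz ⊢
          rcases hno2a z ⟨hz.2, hz.1⟩ with h | h
          · exact Or.inr h
          · exact Or.inl h
        exact driver_aux hn hodd K hx' hz01' hz02' hz0b' hno2a'
      · exact driver_aux hn hodd K hx hz01 hz02 hb hno2a

def zeroV (n : ℕ) : V n := fun _ => false

def cex (n : ℕ) : V n → Fin 3 := fun v =>
  if v = zeroV n then 0 else if v = neg (zeroV n) then 1 else 2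

lemma cex_spec (n : ℕ) (w : V n) :
    (w = zeroV n ∧ cex n w = 0) ∨ (w = neg (zeroV n) ∧ cex n w = 1) ∨
      (w ≠ zeroV n ∧ w ≠ neg (zeroV n) ∧ cex n w = 2) := by
  unfold cex
  split_ifs with h1 h2
  · exact Or.inl ⟨h1, rfl⟩
  · exact Or.inr (Or.inl ⟨h2, rfl⟩)
  · exact Or.inr (Or.inr ⟨h1, h2, rfl⟩)

lemma cex_surj (hn : 3 ≤ n) : Function.Surjective (cex n) := by
  intro r
  have h1 : cex n (zeroV n) = 0 := by unfold cex; rw [if_pos rfl]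
  have hne := neg_ne (by omega : 1 ≤ n) (zeroV n)
  have h2 : cex n (neg (zeroV n)) = 1 := by unfold cex; rw [if_neg hne, if_pos rfl]
  set w : V n := Function.update (zeroV n) ⟨0, by omega⟩ true with hwdef
  have hw1 : w ≠ zeroV n := by
    intro h
    have h2 := congrFun h ⟨0, by omega⟩
    rw [hwdef] at h2
    simp [Function.update_self, zeroV] at h2
  have hw2 : w ≠ neg (zeroV n) := by
    intro h
    have h2 := congrFun h ⟨1, by omega⟩
    have hne01 : (⟨1, by omega⟩ : Fin n) ≠ ⟨0, by omega⟩ := by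
      intro hh
      have := congrArg Fin.val hh
      simp at this
    rw [hwdef] at h2
    rw [Function.update_of_ne hne01] at h2
    simp [zeroV, neg] at h2
  have h3 : cex n w = 2 := by unfold cex; rw [if_neg hw1, if_neg hw2]
  fin_cases r
  · exact ⟨zeroV n, h1⟩
  · exact ⟨neg (zeroV n), h2⟩
  · exact ⟨w, h3⟩

lemma cex_noRainbow (hn : 3 ≤ n) (hodd : Odd n) :
    ¬ HasRainbowAP (hypercube n) 3 (cex n) := by
  rintro ⟨v, ⟨d, hAP⟩, hcol⟩
  obtain ⟨r1, hd1⟩ := hAP 0 (by omega)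
  obtain ⟨r2, hd2⟩ := hAP 1 (by omega)
  rw [dist_eq] at hd1 hd2
  norm_num at hd1 hd2
  have heq : hammingDist (v 1) (v 0) = hammingDist (v 1) (v 2) := by
    rw [hd_comm (v 1) (v 0)]
    omega
  have c01 := hcol 0 1 (by omega) (by omega) (by omega)
  have c02 := hcol 0 2 (by omega) (by omega) (by omega)
  have c12 := hcol 1 2 (by omega) (by omega) (by omega)
  obtain ⟨m, hm⟩ := hodd
  rcases cex_spec n (v 1) with ⟨hs, hsv⟩ | ⟨hs, hsv⟩ | ⟨hs1, hs2, hsv⟩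
  · rcases cex_spec n (v 0) with ⟨ha, hav⟩ | ⟨ha, hav⟩ | ⟨ha1, ha2, hav⟩
    · exact c01 (by rw [hav, hsv])
    · rcases cex_spec n (v 2) with ⟨hb, hbv⟩ | ⟨hb, hbv⟩ | ⟨hb1, hb2, hbv⟩
      · exact c12 (by rw [hsv, hbv])
      · exact c02 (by rw [hav, hbv])
      · rw [hs, ha, hd_self_neg] at heq
        exact hb2 (eq_neg_of_hd_eq_n heq.symm)
    · rcases cex_spec n (v 2) with ⟨hb, hbv⟩ | ⟨hb, hbv⟩ | ⟨hb1, hb2, hbv⟩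
      · exact c12 (by rw [hsv, hbv])
      · rw [hs, hb, hd_self_neg] at heq
        exact ha2 (eq_neg_of_hd_eq_n heq)
      · exact c02 (by rw [hav, hbv])
  · rcases cex_spec n (v 0) with ⟨ha, hav⟩ | ⟨ha, hav⟩ | ⟨ha1, ha2, hav⟩
    · rcases cex_spec n (v 2) with ⟨hb, hbv⟩ | ⟨hb, hbv⟩ | ⟨hb1, hb2, hbv⟩
      · exact c02 (by rw [hav, hbv])
      · exact c12 (by rw [hsv, hbv])
      · rw [hs, ha, hd_comm (neg (zeroV n)) (zeroV n), hd_self_neg] at heq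
        have hb' := eq_neg_of_hd_eq_n heq.symm
        rw [neg_neg] at hb'
        exact hb1 hb'
    · exact c01 (by rw [hav, hsv])
    · rcases cex_spec n (v 2) with ⟨hb, hbv⟩ | ⟨hb, hbv⟩ | ⟨hb1, hb2, hbv⟩
      · rw [hs, hb, hd_comm (neg (zeroV n)) (zeroV n), hd_self_neg] at heq
        have ha' := eq_neg_of_hd_eq_n heq
        rw [neg_neg] at ha'
        exact ha1 ha'
      · exact c12 (by rw [hsv, hbv])
      · exact c02 (by rw [hav, hbv])
  · rcases cex_spec n (v 0) with ⟨ha, hav⟩ | ⟨ha, hav⟩ | ⟨ha1, ha2, hav⟩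
    · rcases cex_spec n (v 2) with ⟨hb, hbv⟩ | ⟨hb, hbv⟩ | ⟨hb1, hb2, hbv⟩
      · exact c02 (by rw [hav, hbv])
      · rw [ha, hb] at heq
        have hsum := hd_neg_right (v 1) (zeroV n)
        omega
      · exact c12 (by rw [hsv, hbv])
    · rcases cex_spec n (v 2) with ⟨hb, hbv⟩ | ⟨hb, hbv⟩ | ⟨hb1, hb2, hbv⟩
      · rw [ha, hb] at heq
        have hsum := hd_neg_right (v 1) (zeroV n)
        omega
      · exact c02 (by rw [hav, hbv])
      · exact c12 (by rw [hsv, hbv])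
    · exact c01 (by rw [hav, hsv])

def phiM : Fin 4 → Fin 3 := ![0, 1, 2, 2]
def psiM : Fin 4 → Fin 3 := ![0, 0, 1, 2]

lemma phi_vals : phiM 0 = 0 ∧ phiM 1 = 1 ∧ phiM 2 = 2 ∧ phiM 3 = 2 := by decide
lemma phi_ne2 : ∀ a : Fin 4, phiM a ≠ 2 → a = 0 ∨ a = 1 := by decide
lemma phi_eq2 : ∀ a : Fin 4, phiM a = 2 → a = 2 ∨ a = 3 := by decide
lemma psi_zero : ∀ a : Fin 4, (a = 0 ∨ a = 1) → psiM a = 0 := by decide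
lemma psi_ne_zero : ∀ a : Fin 4, (a = 2 ∨ a = 3) → psiM a ≠ 0 := by decide

lemma four_mem (hn : 3 ≤ n) (hodd : Odd n) (c : V n → Fin 4)
    (hsurj : Function.Surjective c) : HasRainbowAP (hypercube n) 3 c := by
  by_contra hNR
  obtain ⟨v0, hv0⟩ := hsurj 0
  obtain ⟨v1, hv1⟩ := hsurj 1
  obtain ⟨v2, hv2⟩ := hsurj 2
  obtain ⟨v3, hv3⟩ := hsurj 3
  -- first merged coloring
  have hNR1 : ¬ HasRainbowAP (hypercube n) 3 (phiM ∘ c) := by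
    rintro ⟨v, hAP, hcol⟩
    exact hNR ⟨v, hAP, fun i j hi hj hij h => hcol i j hi hj hij (congrArg phiM h)⟩
  have hsurj1 : Function.Surjective (phiM ∘ c) := by
    intro y
    fin_cases y
    · exact ⟨v0, by simp [Function.comp, hv0, phi_vals.1]⟩
    · exact ⟨v1, by simp [Function.comp, hv1, phi_vals.2.1]⟩
    · exact ⟨v2, by simp [Function.comp, hv2, phi_vals.2.2.1]⟩
  obtain ⟨x, hx, hxall⟩ := main_structure hn hodd hsurj1 hNR1
  have hc1v2 : (phiM ∘ c) v2 = 2 := by simp [Function.comp, hv2, phi_vals.2.2.1]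
  have hc1v3 : (phiM ∘ c) v3 = 2 := by simp [Function.comp, hv3, phi_vals.2.2.2]
  -- c1 x ≠ 2 and c1 (neg x) ≠ 2
  have hx2 : (phiM ∘ c) x ≠ 2 ∧ (phiM ∘ c) (neg x) ≠ 2 := by
    constructor
    · intro h2
      by_cases hv2x : v2 = x ∨ v2 = neg x
      · by_cases hv3x : v3 = x ∨ v3 = neg x
        · -- {v2, v3} = {x, neg x} : both colors 2
          have hvne : v2 ≠ v3 := by
            intro h
            rw [h, hv3] at hv2
            exact absurd hv2 (by decide)
          rcases hv2x with h1 | h1 <;> rcases hv3x with h3 | h3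
          · exact hvne (h1.trans h3.symm)
          · apply hx
            rw [← h3, ← h1, hc1v2, hc1v3]
          · apply hx
            rw [← h1, ← h3, hc1v3, hc1v2]
          · exact hvne (h1.trans h3.symm)
        · push_neg at hv3x
          exact (hxall v3 hv3x.1 hv3x.2).1 (by rw [hc1v3, h2])
      · push_neg at hv2x
        exact (hxall v2 hv2x.1 hv2x.2).1 (by rw [hc1v2, h2])
    · intro h2
      by_cases hv2x : v2 = x ∨ v2 = neg x
      · by_cases hv3x : v3 = x ∨ v3 = neg x
        · have hvne : v2 ≠ v3 := by
            intro h
            rw [h, hv3] at hv2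
            exact absurd hv2 (by decide)
          rcases hv2x with h1 | h1 <;> rcases hv3x with h3 | h3
          · exact hvne (h1.trans h3.symm)
          · apply hx
            rw [← h3, ← h1, hc1v2, hc1v3]
          · apply hx
            rw [← h1, ← h3, hc1v3, hc1v2]
          · exact hvne (h1.trans h3.symm)
        · push_neg at hv3x
          exact (hxall v3 hv3x.1 hv3x.2).2 (by rw [hc1v3, h2])
      · push_neg at hv2x
        exact (hxall v2 hv2x.1 hv2x.2).2 (by rw [hc1v2, h2])
  -- c x, c neg x ∈ {0,1}
  have hcx01 : c x = 0 ∨ c x = 1 := phi_ne2 (c x) hx2.1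
  have hcnx01 : c (neg x) = 0 ∨ c (neg x) = 1 := phi_ne2 (c (neg x)) hx2.2
  -- off-pair vertices have c ∈ {2,3}
  have hoff : ∀ w : V n, w ≠ x → w ≠ neg x → (c w = 2 ∨ c w = 3) := by
    intro w h1 h2
    have h3 := hxall w h1 h2
    have h4 : (phiM ∘ c) w = 2 := by
      rcases fin3_cases ((phiM ∘ c) x) ((phiM ∘ c) (neg x)) 2 ((phiM ∘ c) w)
        hx hx2.1 hx2.2 with h | h | h
      · exact absurd h h3.1
      · exact absurd h h3.2
      · exact h
    exact phi_eq2 (c w) h4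
  -- second merged coloring
  have hNR2 : ¬ HasRainbowAP (hypercube n) 3 (psiM ∘ c) := by
    rintro ⟨v, hAP, hcol⟩
    exact hNR ⟨v, hAP, fun i j hi hj hij h => hcol i j hi hj hij (congrArg psiM h)⟩
  have hsurj2 : Function.Surjective (psiM ∘ c) := by
    intro y
    fin_cases y
    · exact ⟨x, psi_zero (c x) hcx01⟩
    · exact ⟨v2, by simp [Function.comp, hv2]; decide⟩
    · exact ⟨v3, by simp [Function.comp, hv3]; decide⟩
  obtain ⟨y, hy, hyall⟩ := main_structure hn hodd hsurj2 hNR2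
  -- a fifth vertex
  have hcard : 4 < Fintype.card (V n) := by
    have h1 : Fintype.card (V n) = 2 ^ n := by
      rw [Fintype.card_fun]
      simp
    have h2 : 2 ^ 3 ≤ 2 ^ n := Nat.pow_le_pow_right (by omega) hn
    omega
  obtain ⟨w, hw⟩ : ∃ w : V n, w ∉ ({x, neg x, y, neg y} : Finset (V n)) := by
    by_contra h
    push_neg at h
    have hsub : Finset.univ ⊆ ({x, neg x, y, neg y} : Finset (V n)) := fun w _ => h w
    have hc := Finset.card_le_card hsub
    have h1 : ({x, neg x, y, neg y} : Finset (V n)).card ≤ 4 := by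
      apply le_trans (Finset.card_insert_le _ _)
      apply Nat.succ_le_succ
      apply le_trans (Finset.card_insert_le _ _)
      apply Nat.succ_le_succ
      apply le_trans (Finset.card_insert_le _ _)
      apply Nat.succ_le_succ
      simp
    rw [Finset.card_univ] at hc
    omega
  simp only [Finset.mem_insert, Finset.mem_singleton, not_or] at hw
  obtain ⟨hw1, hw2, hw3, hw4⟩ := hw
  -- c2 w ≠ 0 but c2 x = c2 (neg x) = 0
  have hc2w : (psiM ∘ c) w ≠ 0 := psi_ne_zero (c w) (hoff w hw1 hw2)
  have hc2x : (psiM ∘ c) x = 0 := psi_zero (c x) hcx01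
  have hc2nx : (psiM ∘ c) (neg x) = 0 := psi_zero (c (neg x)) hcnx01
  have hwoff := hyall w hw3 hw4
  -- x ∈ {y, neg y}
  have hxy : x = y ∨ x = neg y := by
    by_contra h
    push_neg at h
    have h3 := hyall x h.1 h.2
    have : (psiM ∘ c) x = (psiM ∘ c) w :=
      fin3_eq ((psiM ∘ c) y) ((psiM ∘ c) (neg y)) _ _ h3.1 h3.2 hwoff.1 hwoff.2 hy
    rw [hc2x] at this
    exact hc2w this.symm
  have hnxy : neg x = y ∨ neg x = neg y := by
    by_contra h
    push_neg at h
    have h3 := hyall (neg x) h.1 h.2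
    have : (psiM ∘ c) (neg x) = (psiM ∘ c) w :=
      fin3_eq ((psiM ∘ c) y) ((psiM ∘ c) (neg y)) _ _ h3.1 h3.2 hwoff.1 hwoff.2 hy
    rw [hc2nx] at this
    exact hc2w this.symm
  have hxne : x ≠ neg x := by
    intro h
    exact hx (congrArg (phiM ∘ c) h)
  rcases hxy with h1 | h1 <;> rcases hnxy with h3 | h3
  · exact hxne (h1.trans h3.symm)
  · apply hy
    rw [← h1, hc2x, hc2nx]
  · apply hy
    rw [← h3, neg_neg, hc2nx, hc2x]
  · exact hxne (h1.trans h3.symm)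

lemma fin2_no3 : ∀ a b c : Fin 2, a ≠ b → a ≠ c → b ≠ c → False := by decide

lemma one_works (hn : 3 ≤ n) :
    ∃ c : V n → Fin 1, Function.Surjective c ∧ ¬ HasRainbowAP (hypercube n) 3 c := by
  refine ⟨fun _ => 0, fun y => ⟨zeroV n, Subsingleton.elim _ _⟩, ?_⟩
  rintro ⟨v, -, hcol⟩
  exact hcol 0 1 (by omega) (by omega) (by omega) (Subsingleton.elim _ _)

lemma two_works (hn : 3 ≤ n) :
    ∃ c : V n → Fin 2, Function.Surjective c ∧ ¬ HasRainbowAP (hypercube n) 3 c := by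
  refine ⟨fun v => if v = zeroV n then 0 else 1, ?_, ?_⟩
  · intro y
    fin_cases y
    · exact ⟨zeroV n, by simp⟩
    · exact ⟨neg (zeroV n), by simp [neg_ne (show (1:ℕ) ≤ n by omega) (zeroV n)]⟩
  · rintro ⟨v, -, hcol⟩
    exact fin2_no3 _ _ _ (hcol 0 1 (by omega) (by omega) (by omega))
      (hcol 0 2 (by omega) (by omega) (by omega))
      (hcol 1 2 (by omega) (by omega) (by omega))

lemma aw_eq4 (hn : 3 ≤ n) (hodd : Odd n) : aw (hypercube n) 3 = 4 := by
  have h4 : (4 : ℕ) ∈ {r : ℕ | 0 < r ∧ ∀ c : (Fin n → Bool) → Fin r,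
      Function.Surjective c → HasRainbowAP (hypercube n) 3 c} :=
    ⟨by omega, fun c hc => four_mem hn hodd c hc⟩
  show sInf _ = 4
  apply le_antisymm
  · exact Nat.sInf_le h4
  · have hne : Set.Nonempty {r : ℕ | 0 < r ∧ ∀ c : (Fin n → Bool) → Fin r,
        Function.Surjective c → HasRainbowAP (hypercube n) 3 c} := ⟨4, h4⟩
    have hmem := Nat.sInf_mem hne
    obtain ⟨hpos, hall⟩ := hmem
    by_contra hlt
    push_neg at hlt
    have h123 : sInf {r : ℕ | 0 < r ∧ ∀ c : (Fin n → Bool) → Fin r,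
        Function.Surjective c → HasRainbowAP (hypercube n) 3 c} = 1 ∨
        sInf {r : ℕ | 0 < r ∧ ∀ c : (Fin n → Bool) → Fin r,
        Function.Surjective c → HasRainbowAP (hypercube n) 3 c} = 2 ∨
        sInf {r : ℕ | 0 < r ∧ ∀ c : (Fin n → Bool) → Fin r,
        Function.Surjective c → HasRainbowAP (hypercube n) 3 c} = 3 := by omega
    rcases h123 with h | h | h
    · rw [h] at hall
      obtain ⟨c1, hc1s, hc1n⟩ := one_works (n := n) hn
      exact hc1n (hall c1 hc1s)
    · rw [h] at hall
      obtain ⟨c2, hc2s, hc2n⟩ := two_works (n := n) hn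
      exact hc2n (hall c2 hc2s)
    · rw [h] at hall
      exact (cex_noRainbow hn hodd) (hall (cex n) (cex_surj hn))

end Machines

end Aux

/-- For odd `n ≥ 3`, `aw(Q_n,3) = 4`, and the unique (up to color permutation)
rainbow-3-AP-free surjective 3-coloring colors some vertex and its antipode with two
distinct colors and all remaining vertices with the third color. -/
theorem stmt_13 (n : ℕ) (hn : 3 ≤ n) (hodd : Odd n) :
    aw (hypercube n) 3 = 4 ∧
      ∀ c : (Fin n → Bool) → Fin 3, Function.Surjective c →
        ¬ HasRainbowAP (hypercube n) 3 c →
        ∃ x : Fin n → Bool,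
          c x ≠ c (fun i => !(x i)) ∧
          (∀ y, y ≠ x → y ≠ (fun i => !(x i)) → c y ≠ c x ∧ c y ≠ c (fun i => !(x i))) ∧
          (∀ y z, y ≠ x → y ≠ (fun i => !(x i)) → z ≠ x → z ≠ (fun i => !(x i)) →
            c y = c z) := by
  constructor
  · exact Aux.aw_eq4 hn hodd
  · intro c hsurj hNR
    obtain ⟨x, hx, hall⟩ := Aux.main_structure hn hodd hsurj hNR
    refine ⟨x, hx, ?_, ?_⟩
    · intro y h1 h2
      exact hall y h1 h2
    · intro y z h1 h2 h3 h4
      have hy := hall y h1 h2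
      have hz := hall z h3 h4
      exact Aux.fin3_eq (c x) (c (Aux.neg x)) (c y) (c z) hy.1 hy.2 hz.1 hz.2 hx


end AntiVDW
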